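/- For any prime p, any integer a > 0, and any integer d with |d| ≤ p^a, the congruence ∑_{k=0}^{p^a - 1} binom(2k, k+d) ≡ ((p^a - |d|)/3) (mod p) holds, where ((m)/3) is the Legendre symbol mod 3. -/

import Mathlib

/-- The Legendre symbol mod 3. -/
def leg3 (m : ℤ) : ℤ := if m % 3 = 0 then 0 else if m % 3 = 1 then 1 else -1

/-- Ordinary binomial coefficient `C(m, j)` with integer lower index
(zero when `j < 0` or `j > m`). -/
def chooseZ (m : ℕ) (j : ℤ) : ℕ := if 0 ≤ j then m.choose j.toNat else 0

lemma leg3_three (e : ℤ) : leg3 e + leg3 (e + 1) + leg3 (e + 2) = 0 := by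
  unfold leg3; split_ifs <;> omega

lemma chooseZ_eq (k : ℕ) (d : ℤ) :
    chooseZ (2 * k) (k + d) = (2 * k).choose (k + d.natAbs) := by
  rcases le_or_gt 0 d with h | h
  · simp only [chooseZ]
    rw [if_pos (by omega)]
    congr 1
    omega
  · rcases le_or_gt 0 ((k : ℤ) + d) with h2 | h2
    · have hle : d.natAbs ≤ k := by omega
      simp only [chooseZ]
      rw [if_pos h2]
      have e1 : ((k : ℤ) + d).toNat = k - d.natAbs := by omega
      rw [e1]
      have e2 : k - d.natAbs = 2 * k - (k + d.natAbs) := by omega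
      rw [e2, Nat.choose_symm (by omega)]
    · simp only [chooseZ]
      rw [if_neg (by omega)]
      exact (Nat.choose_eq_zero_of_lt (by omega)).symm

lemma rec1 (k d : ℕ) :
    (2 * (k + 1)).choose ((k + 1) + (d + 1)) =
      (2 * k).choose (k + d) + (2 * k).choose (k + d + 1)
        + ((2 * k).choose (k + d + 1) + (2 * k).choose (k + d + 2)) := by
  have e1 : 2 * (k + 1) = (2 * k + 1) + 1 := by ring
  have e2 : (k + 1) + (d + 1) = (k + d + 1) + 1 := by ring
  rw [e1, e2, Nat.choose_succ_succ]
  have e3 : 2 * k + 1 = (2 * k) + 1 := rfl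
  have e4 : k + d + 1 = (k + d) + 1 := rfl
  rw [e3, e4, Nat.choose_succ_succ]
  have e5 : (k + d) + 1 + 1 = (k + d + 1) + 1 := rfl
  rw [e5, Nat.choose_succ_succ]

lemma rec2 (n d : ℕ) :
    (∑ k ∈ Finset.range n, (2 * k).choose (k + d))
      + (∑ k ∈ Finset.range n, (2 * k).choose (k + (d + 1)))
      + (∑ k ∈ Finset.range n, (2 * k).choose (k + (d + 2))) =
    (2 * n).choose (n + d + 1) := by
  have h1 : (∑ k ∈ Finset.range n, (2 * (k + 1)).choose ((k + 1) + (d + 1)))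
      = (∑ k ∈ Finset.range n, (2 * k).choose (k + d))
        + (∑ k ∈ Finset.range n, (2 * k).choose (k + d + 1))
        + ((∑ k ∈ Finset.range n, (2 * k).choose (k + d + 1))
          + (∑ k ∈ Finset.range n, (2 * k).choose (k + d + 2))) := by
    rw [← Finset.sum_add_distrib, ← Finset.sum_add_distrib, ← Finset.sum_add_distrib]
    exact Finset.sum_congr rfl fun k _ => rec1 k d
  have h2 : (∑ k ∈ Finset.range (n + 1), (2 * k).choose (k + (d + 1)))
      = (∑ k ∈ Finset.range n, (2 * (k + 1)).choose ((k + 1) + (d + 1)))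
        + (2 * 0).choose (0 + (d + 1)) := Finset.sum_range_succ' _ n
  have h3 : (∑ k ∈ Finset.range (n + 1), (2 * k).choose (k + (d + 1)))
      = (∑ k ∈ Finset.range n, (2 * k).choose (k + (d + 1)))
        + (2 * n).choose (n + (d + 1)) := Finset.sum_range_succ _ n
  have h4 : (2 * 0).choose (0 + (d + 1)) = 0 := Nat.choose_eq_zero_of_lt (by omega)
  have e1 : ∀ k, k + (d + 1) = k + d + 1 := fun k => by ring
  have e2 : ∀ k, k + (d + 2) = k + d + 2 := fun k => by ring
  simp only [e1, e2] at *
  omega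

lemma dvd_big {p a : ℕ} (hp : p.Prime) {j : ℕ}
    (h1 : p ^ a < j) (h2 : j < 2 * p ^ a) : p ∣ (2 * p ^ a).choose j := by
  have hsym : (2 * p ^ a).choose j = (2 * p ^ a).choose (2 * p ^ a - j) :=
    (Nat.choose_symm (le_of_lt h2)).symm
  rw [hsym]
  set i := 2 * p ^ a - j with hi
  have hi1 : 0 < i := by omega
  have hi2 : i < p ^ a := by omega
  rw [show 2 * p ^ a = p ^ a + p ^ a from by ring, Nat.add_choose_eq]
  apply Finset.dvd_sum
  intro st hst
  rw [Finset.HasAntidiagonal.mem_antidiagonal] at hst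
  rcases Nat.eq_zero_or_pos st.1 with h0 | h0
  · have ht : st.2 = i := by omega
    exact Dvd.dvd.mul_left (hp.dvd_choose_pow (by omega) (by omega)) _
  · exact Dvd.dvd.mul_right (hp.dvd_choose_pow (by omega) (by omega)) _

lemma main_lemma (p : ℕ) (hp : p.Prime) (a : ℕ) (ha : 0 < a) :
    ∀ e, e ≤ p ^ a →
      (∑ k ∈ Finset.range (p ^ a), ((2 * k).choose (k + (p ^ a - e)) : ℤ)) ≡
        leg3 e [ZMOD p] := by
  have hpa : 1 < p ^ a := Nat.one_lt_pow (by omega) hp.one_lt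
  intro e
  induction e using Nat.strong_induction_on with
  | _ e ih =>
    intro he
    match e with
    | 0 =>
      have hz : (∑ k ∈ Finset.range (p ^ a), ((2 * k).choose (k + (p ^ a - 0)) : ℤ)) = 0 := by
        apply Finset.sum_eq_zero
        intro k hk
        rw [Finset.mem_range] at hk
        rw [Nat.choose_eq_zero_of_lt (by omega)]
        simp
      rw [hz]
      show (0 : ℤ) ≡ leg3 0 [ZMOD p]
      simp [leg3]
    | 1 =>
      obtain ⟨m, hm⟩ : ∃ m, p ^ a = m + 1 := ⟨p ^ a - 1, by omega⟩
      have hone : (∑ k ∈ Finset.range (p ^ a), ((2 * k).choose (k + (p ^ a - 1)) : ℤ)) = 1 := by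
        rw [hm]
        rw [Finset.sum_range_succ]
        have hz : (∑ k ∈ Finset.range m, ((2 * k).choose (k + (m + 1 - 1)) : ℤ)) = 0 := by
          apply Finset.sum_eq_zero
          intro k hk
          rw [Finset.mem_range] at hk
          rw [Nat.choose_eq_zero_of_lt (by omega)]
          simp
        rw [hz]
        have : m + (m + 1 - 1) = 2 * m := by omega
        rw [this, Nat.choose_self]
        simp
      rw [hone]
      show (1 : ℤ) ≡ leg3 1 [ZMOD p]
      simp [leg3]
    | (e + 2) =>
      set d := p ^ a - (e + 2) with hd
      have h1 : p ^ a - (e + 1) = d + 1 := by omega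
      have h2 : p ^ a - e = d + 2 := by omega
      have ih1 := ih e (by omega) (by omega)
      have ih2 := ih (e + 1) (by omega) (by omega)
      rw [h2] at ih1
      rw [h1] at ih2
      have hrec := rec2 (p ^ a) d
      have hdvd : (p : ℤ) ∣ ((2 * p ^ a).choose (p ^ a + d + 1) : ℤ) := by
        exact_mod_cast Int.natCast_dvd_natCast.mpr (dvd_big hp (by omega) (by omega))
      have hC : ((2 * p ^ a).choose (p ^ a + d + 1) : ℤ) ≡ 0 [ZMOD p] :=
        (Int.modEq_zero_iff_dvd).mpr hdvd
      have hrecZ : (∑ k ∈ Finset.range (p ^ a), ((2 * k).choose (k + d) : ℤ))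
          = ((2 * p ^ a).choose (p ^ a + d + 1) : ℤ)
            - (∑ k ∈ Finset.range (p ^ a), ((2 * k).choose (k + (d + 1)) : ℤ))
            - (∑ k ∈ Finset.range (p ^ a), ((2 * k).choose (k + (d + 2)) : ℤ)) := by
        have := congrArg (Nat.cast : ℕ → ℤ) hrec
        push_cast at this
        linarith
      rw [hrecZ]
      have hcomb := (hC.sub ih2).sub ih1
      have : (0 : ℤ) - leg3 (↑(e + 1)) - leg3 (↑e) = leg3 (↑(e + 2)) := by
        have h3 := leg3_three (e : ℤ)
        push_cast
        push_cast at h3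
        linarith
      rwa [this] at hcomb

/-- For a prime `p`, `a > 0` and `|d| ≤ p^a`:
`∑_{k=0}^{p^a-1} C(2k, k+d) ≡ ((p^a - |d|)/3) (mod p)`. -/
theorem stmt_10 (p : ℕ) (hp : p.Prime) (a : ℕ) (ha : 0 < a) (d : ℤ)
    (hd : d.natAbs ≤ p ^ a) :
    (∑ k ∈ Finset.range (p ^ a), (chooseZ (2 * k) (k + d) : ℤ)) ≡
      leg3 ((p : ℤ) ^ a - d.natAbs) [ZMOD p] := by
  have h := main_lemma p hp a ha (p ^ a - d.natAbs) (Nat.sub_le _ _)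
  have e1 : p ^ a - (p ^ a - d.natAbs) = d.natAbs := by omega
  rw [e1] at h
  have e2 : ((↑(p ^ a - d.natAbs) : ℤ)) = (p : ℤ) ^ a - (d.natAbs : ℤ) := by
    push_cast [Nat.cast_sub hd]
    ring
  rw [e2] at h
  have e3 : (∑ k ∈ Finset.range (p ^ a), (chooseZ (2 * k) (k + d) : ℤ))
      = ∑ k ∈ Finset.range (p ^ a), ((2 * k).choose (k + d.natAbs) : ℤ) :=
    Finset.sum_congr rfl fun k _ => by rw [chooseZ_eq]
  rw [e3]
  exact h
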